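/- Let μ be a finite Borel measure on ℝ and define Ψ(u) = ∫ℝ g(u,x) dμ(x), where g(u,x) = (e^{iux} − 1 − iux)/x² for x ≠ 0 and g(u,0) = −u²/2. Then Ψ is twice differentiable with Ψ(0) = 0, Ψ'(0) = 0, Ψ''(u) = −∫ e^{iux} dμ(x), and in particular Ψ''(0) = −μ(ℝ). -/

import Mathlib

open MeasureTheory Filter Complex

noncomputable section

/-- The function `g(u,x) = (e^{iux} − 1 − iux)/x²`, extended by `g(u,0) = −u²/2`. -/
def gFun (u x : ℝ) : ℂ :=
  if x = 0 then -(u ^ 2) / 2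
  else (Complex.exp (u * x * Complex.I) - 1 - u * x * Complex.I) / (x ^ 2)

/-- Derivative of `gFun` in `u`. -/
def gDer (u x : ℝ) : ℂ :=
  if x = 0 then -u
  else (Complex.exp (u * x * Complex.I) - 1) * Complex.I / x

lemma gFun_zero (x : ℝ) : gFun 0 x = 0 := by
  unfold gFun
  split <;> simp

lemma gDer_zero (x : ℝ) : gDer 0 x = 0 := by
  unfold gDer
  split <;> simp

lemma hasDerivAt_coe_mul (u : ℝ) (c : ℂ) :
    HasDerivAt (fun v : ℝ => (v : ℂ) * c) c u := by
  simpa using (Complex.ofRealCLM.hasDerivAt (x := u)).mul_const c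

lemma hasDerivAt_gFun (u x : ℝ) :
    HasDerivAt (fun v => gFun v x) (gDer u x) u := by
  rcases eq_or_ne x 0 with hx | hx
  · subst hx
    have h : HasDerivAt (fun v : ℝ => -((v : ℂ) * (v : ℂ)) / 2) (-(u : ℂ)) u := by
      have h1 : HasDerivAt (fun v : ℝ => (v : ℂ)) 1 u := by
        exact Complex.ofRealCLM.hasDerivAt (x := u)
      have := ((h1.mul h1).neg).div_const 2
      refine this.congr_deriv ?_
      ring
    have heq : (fun v : ℝ => gFun v 0) = fun v : ℝ => -((v : ℂ) * (v : ℂ)) / 2 := by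
      funext v; simp [gFun, pow_two]
    rw [heq, gDer, if_pos rfl]
    exact h
  · have h1 : HasDerivAt (fun v : ℝ => (v : ℂ) * ((x : ℂ) * Complex.I))
        ((x : ℂ) * Complex.I) u := hasDerivAt_coe_mul u _
    have h2 : HasDerivAt (fun v : ℝ => Complex.exp ((v : ℂ) * ((x : ℂ) * Complex.I)))
        (Complex.exp ((u : ℂ) * ((x : ℂ) * Complex.I)) * ((x : ℂ) * Complex.I)) u := h1.cexp
    have h3 := ((h2.sub_const 1).sub h1).div_const ((x : ℂ) ^ 2)
    have heq : (fun v : ℝ => gFun v x) =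
        fun v : ℝ => (Complex.exp ((v : ℂ) * ((x : ℂ) * Complex.I)) - 1
          - (v : ℂ) * ((x : ℂ) * Complex.I)) / ((x : ℂ) ^ 2) := by
      funext v; simp [gFun, hx, mul_assoc]
    rw [heq, gDer, if_neg hx]
    refine h3.congr_deriv ?_
    have hx' : (x : ℂ) ≠ 0 := by exact_mod_cast hx
    field_simp

lemma hasDerivAt_gDer (u x : ℝ) :
    HasDerivAt (fun v => gDer v x) (-Complex.exp (u * x * Complex.I)) u := by
  rcases eq_or_ne x 0 with hx | hx
  · subst hx
    have h1 : HasDerivAt (fun v : ℝ => (v : ℂ)) 1 u := by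
      exact Complex.ofRealCLM.hasDerivAt (x := u)
    have heq : (fun v : ℝ => gDer v 0) = fun v : ℝ => -(v : ℂ) := by
      funext v; simp [gDer]
    rw [heq]
    exact h1.neg.congr_deriv (by simp)
  · have h1 : HasDerivAt (fun v : ℝ => (v : ℂ) * ((x : ℂ) * Complex.I))
        ((x : ℂ) * Complex.I) u := hasDerivAt_coe_mul u _
    have h2 : HasDerivAt (fun v : ℝ => Complex.exp ((v : ℂ) * ((x : ℂ) * Complex.I)))
        (Complex.exp ((u : ℂ) * ((x : ℂ) * Complex.I)) * ((x : ℂ) * Complex.I)) u := h1.cexp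
    have h3 := ((h2.sub_const 1).mul_const Complex.I).div_const (x : ℂ)
    have heq : (fun v : ℝ => gDer v x) =
        fun v : ℝ => (Complex.exp ((v : ℂ) * ((x : ℂ) * Complex.I)) - 1) * Complex.I
          / (x : ℂ) := by
      funext v; simp [gDer, hx, mul_assoc]
    rw [heq]
    refine h3.congr_deriv ?_
    have hx' : (x : ℂ) ≠ 0 := by exact_mod_cast hx
    rw [mul_assoc]
    field_simp
    ring_nf
    simp [Complex.I_sq]

lemma norm_exp_I_aux (v x : ℝ) : ‖Complex.exp (v * x * Complex.I)‖ = 1 := by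
  rw [show ((v : ℂ) * x * Complex.I) = ((v * x : ℝ) : ℂ) * Complex.I by push_cast; ring,
    Complex.norm_exp_ofReal_mul_I]

lemma norm_gDer_le (u x : ℝ) : ‖gDer u x‖ ≤ |u| := by
  have key : ‖gDer u x - gDer 0 x‖ ≤ 1 * ‖u - (0 : ℝ)‖ :=
    convex_univ.norm_image_sub_le_of_norm_hasDerivWithin_le
      (f := fun v : ℝ => gDer v x) (f' := fun w : ℝ => -Complex.exp (w * x * Complex.I))
      (fun w _ => (hasDerivAt_gDer w x).hasDerivWithinAt)
      (fun w _ => by rw [norm_neg, norm_exp_I_aux]) trivial trivial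
  rw [gDer_zero, sub_zero, one_mul, sub_zero, Real.norm_eq_abs] at key
  exact key

lemma norm_gFun_le (u x : ℝ) : ‖gFun u x‖ ≤ u ^ 2 := by
  have key : ‖gFun u x - gFun 0 x‖ ≤ |u| * ‖u - (0 : ℝ)‖ :=
    (convex_Icc (-|u|) |u|).norm_image_sub_le_of_norm_hasDerivWithin_le
      (f := fun v : ℝ => gFun v x) (f' := fun w : ℝ => gDer w x)
      (fun w _ => ((hasDerivAt_gFun w x).hasDerivWithinAt))
      (fun w hw => (norm_gDer_le w x).trans (abs_le.2 ⟨hw.1, hw.2⟩))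
      ⟨neg_nonpos.2 (abs_nonneg u), abs_nonneg u⟩
      ⟨neg_abs_le u, le_abs_self u⟩
  rw [gFun_zero, sub_zero, sub_zero, Real.norm_eq_abs] at key
  calc ‖gFun u x‖ ≤ |u| * |u| := key
    _ = u ^ 2 := by rw [← abs_mul, ← sq, abs_sq]

lemma measurable_gFun (u : ℝ) : Measurable (gFun u) := by
  unfold gFun
  apply Measurable.ite (measurableSet_singleton 0) measurable_const
  apply Measurable.div
  · fun_prop
  · fun_prop

lemma measurable_gDer (u : ℝ) : Measurable (gDer u) := by
  unfold gDer
  apply Measurable.ite (measurableSet_singleton 0) measurable_const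
  apply Measurable.div
  · fun_prop
  · fun_prop

theorem psi_derivatives (μ : Measure ℝ) [IsFiniteMeasure μ] :
    (∫ x, gFun 0 x ∂μ) = 0 ∧
    ∃ Ψ' : ℝ → ℂ,
      (∀ u : ℝ, HasDerivAt (fun v => ∫ x, gFun v x ∂μ) (Ψ' u) u) ∧
      Ψ' 0 = 0 ∧
      (∀ u : ℝ, HasDerivAt Ψ' (-∫ x, Complex.exp (u * x * Complex.I) ∂μ) u) ∧
      (-∫ x, Complex.exp ((0 : ℝ) * x * Complex.I) ∂μ) = -((μ Set.univ).toReal : ℂ) := by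
  refine ⟨by simp [gFun_zero], fun u => ∫ x, gDer u x ∂μ, ?_, ?_, ?_, ?_⟩
  · intro u
    have key := hasDerivAt_integral_of_dominated_loc_of_deriv_le (μ := μ)
      (F := fun v x => gFun v x) (F' := fun v x => gDer v x)
      (x₀ := u) (s := Metric.ball u 1) (bound := fun _ => |u| + 1) (Metric.ball_mem_nhds u one_pos)
      (Eventually.of_forall fun v => (measurable_gFun v).aestronglyMeasurable)
      ?_ ((measurable_gDer u).aestronglyMeasurable) ?_ (integrable_const _) ?_
    · exact key.2
    · exact (integrable_const (u ^ 2)).mono'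
        (measurable_gFun u).aestronglyMeasurable
        (Eventually.of_forall fun x => norm_gFun_le u x)
    · refine Eventually.of_forall fun x v hv => ?_
      refine (norm_gDer_le v x).trans ?_
      have : |v - u| < 1 := by simpa [Real.dist_eq] using hv
      calc |v| = |u + (v - u)| := by ring_nf
        _ ≤ |u| + |v - u| := abs_add_le _ _
        _ ≤ |u| + 1 := by linarith
    · exact Eventually.of_forall fun x v _ => hasDerivAt_gFun v x
  · simp [gDer_zero]
  · intro u
    have key := hasDerivAt_integral_of_dominated_loc_of_deriv_le (μ := μ)
      (F := fun v x => gDer v x) (F' := fun v x => -Complex.exp (v * x * Complex.I))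
      (x₀ := u) (s := Metric.ball u 1) (bound := fun _ => 1) (Metric.ball_mem_nhds u one_pos)
      (Eventually.of_forall fun v => (measurable_gDer v).aestronglyMeasurable)
      ?_ ?_ ?_ (integrable_const _) ?_
    · have h := key.2
      rwa [integral_neg] at h
    · exact (integrable_const |u|).mono'
        (measurable_gDer u).aestronglyMeasurable
        (Eventually.of_forall fun x => norm_gDer_le u x)
    · apply Measurable.aestronglyMeasurable
      apply Measurable.neg
      fun_prop
    · refine Eventually.of_forall fun x v _ => ?_
      rw [norm_neg, norm_exp_I_aux]
    · exact Eventually.of_forall fun x v _ => hasDerivAt_gDer v x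
  · simp [integral_const, Measure.real]
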